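/- For every integer n ≥ 1, Σ_{k=0}^{n} [(-1/2)_k (-n)_k (n+1/2)_k / ((1/4)_k (3/4)_k k!)] · (-x)^k = 1 - 2·Σ_{j=1}^{n} C(n,j) · ((2j-2)!/(j-1)!) · ((1/2+2j)_{n-j}/(1/2)_n) · x^j, as polynomials in x over the rationals. -/

import Mathlib

open Polynomial

/-- Rising factorial (Pochhammer symbol) over ℚ. -/
noncomputable def rf (a : ℚ) (k : ℕ) : ℚ := (ascPochhammer ℚ k).eval a

lemma rf_zero (a : ℚ) : rf a 0 = 1 := by simp [rf]
lemma rf_succ (a : ℚ) (k : ℕ) : rf a (k+1) = rf a k * (a + k) := by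
  simp [rf, ascPochhammer_succ_right]
lemma rf_add (a : ℚ) (m k : ℕ) : rf a (m + k) = rf a m * rf (a + m) k := by
  induction k with
  | zero => simp [rf_zero]
  | succ k ih =>
    rw [show m + (k+1) = (m+k)+1 from rfl, rf_succ, ih, rf_succ]
    push_cast; ring
lemma rf_pos {a : ℚ} (h : 0 < a) (k : ℕ) : 0 < rf a k := by
  induction k with
  | zero => simp [rf_zero]
  | succ k ih =>
    rw [rf_succ]
    have : (0:ℚ) < a + k := by positivity
    positivity

lemma rf_half (m : ℕ) : rf (1/2) m * m.factorial * 4^m = ((2*m).factorial : ℚ) := by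
  induction m with
  | zero => simp [rf_zero]
  | succ m ih =>
    have h : ((2*(m+1)).factorial : ℚ) = (2*m).factorial * (2*m+1) * (2*m+2) := by
      rw [show 2*(m+1) = (2*m+1)+1 by ring, Nat.factorial_succ, Nat.factorial_succ]
      push_cast; ring
    rw [h, rf_succ, Nat.factorial_succ, ← ih]
    push_cast; ring

lemma rf_quarters (k : ℕ) : rf (1/4) k * rf (3/4) k * 4^k = rf (1/2) (2*k) := by
  induction k with
  | zero => simp [rf_zero]
  | succ k ih =>
    rw [show 2*(k+1) = (2*k+1)+1 by ring, rf_succ, rf_succ, rf_succ, rf_succ, ← ih]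
    push_cast; ring

lemma rf_neg_nat (n k : ℕ) (h : k ≤ n) :
    rf (-(n:ℚ)) k * ((n-k).factorial : ℚ) = (-1)^k * n.factorial := by
  induction k with
  | zero => simp [rf_zero]
  | succ k ih =>
    have hk : k ≤ n := Nat.le_of_succ_le h
    have h1 : n - k = (n - (k+1)) + 1 := by omega
    have h2 : ((n - k : ℕ) : ℚ) = (n : ℚ) - k := by
      rw [Nat.cast_sub hk]
    rw [rf_succ]
    have ih' := ih hk
    rw [h1, Nat.factorial_succ] at ih'
    push_cast at ih' ⊢
    have h3 : ((n - (k+1) : ℕ) : ℚ) + 1 = (n:ℚ) - k := by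
      have := Nat.cast_sub h (R := ℚ); push_cast at this; rw [this]; ring
    rw [h3] at ih'
    rw [pow_succ]
    linear_combination (-1 : ℚ) * ih'

lemma rf_one (a : ℚ) : rf a 1 = a := by
  rw [show (1:ℕ) = 0 + 1 from rfl, rf_succ, rf_zero]; push_cast; ring

lemma key (n k : ℕ) (h1 : 1 ≤ k) (h2 : k ≤ n) :
    (-1:ℚ)^k * (rf (-1/2) k * rf (-(n : ℚ)) k * rf ((n : ℚ) + 1/2) k /
        (rf (1/4) k * rf (3/4) k * (k.factorial : ℚ)))
      = -2 * ((n.choose k : ℚ) * (((2 * k - 2).factorial : ℚ) / ((k - 1).factorial : ℚ)) *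
          (rf (1/2 + 2 * k) (n - k) / rf (1/2) n)) := by
  have hA : rf (-1/2) k = -(1/2) * rf (1/2) (k-1) := by
    have h := rf_add (-1/2) 1 (k-1)
    rw [show (1:ℕ) + (k-1) = k by omega] at h
    rw [h, rf_one]
    norm_num
  have hP : rf ((n : ℚ) + 1/2) k = rf (1/2) (n+k) / rf (1/2) n := by
    have h := rf_add (1/2) n k
    have hN : rf (1/2) n ≠ 0 := ne_of_gt (rf_pos (by norm_num) n)
    rw [show (1/2 : ℚ) + (n:ℕ) = (n:ℚ) + 1/2 by push_cast; ring] at h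
    rw [h, mul_div_cancel_left₀ _ hN]
  have hQ : rf (1/2 + 2 * (k:ℚ)) (n - k) = rf (1/2) (n+k) / rf (1/2) (2*k) := by
    have h := rf_add (1/2) (2*k) (n-k)
    rw [show 2*k + (n-k) = n + k by omega] at h
    have hK : rf (1/2) (2*k) ≠ 0 := ne_of_gt (rf_pos (by norm_num) _)
    rw [show ((2*k : ℕ) : ℚ) = 2 * (k:ℚ) by push_cast; ring] at h
    rw [h, mul_div_cancel_left₀ _ hK]
  have hneg := rf_neg_nat n k h2
  have hsq : ((-1:ℚ)^k)^2 = 1 := by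
    rw [← pow_mul, mul_comm, pow_mul]; norm_num
  have hFnk : ((n-k).factorial : ℚ) ≠ 0 := Nat.cast_ne_zero.2 (Nat.factorial_ne_zero _)
  have hneg2 : (-1:ℚ)^k * rf (-(n : ℚ)) k = (n.factorial : ℚ) / ((n-k).factorial : ℚ) := by
    field_simp
    linear_combination ((-1:ℚ)^k) * hneg + (n.factorial:ℚ) * hsq
  have hquart : rf (1/4) k * rf (3/4) k = rf (1/2) (2*k) / 4^k := by
    have := rf_quarters k
    field_simp
    exact this
  have hch : (n.choose k : ℚ) = (n.factorial : ℚ) / ((k.factorial : ℚ) * ((n-k).factorial : ℚ)) :=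
    Nat.cast_choose ℚ h2
  have h22 : ((2*k-2).factorial : ℚ) = rf (1/2) (k-1) * ((k-1).factorial : ℚ) * 4^(k-1) := by
    have := rf_half (k-1)
    rw [show 2*(k-1) = 2*k-2 by omega] at this
    linarith [this]
  have step : (-1:ℚ)^k * (rf (-1/2) k * rf (-(n : ℚ)) k * rf ((n : ℚ) + 1/2) k /
        (rf (1/4) k * rf (3/4) k * (k.factorial : ℚ)))
      = (rf (-1/2) k * ((-1:ℚ)^k * rf (-(n : ℚ)) k) * rf ((n : ℚ) + 1/2) k) /
        (rf (1/4) k * rf (3/4) k * (k.factorial : ℚ)) := by ring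
  rw [step, hneg2, hA, hP, hQ, hquart, hch, h22]
  have hN : rf (1/2) n ≠ 0 := ne_of_gt (rf_pos (by norm_num) n)
  have hK : rf (1/2) (2*k) ≠ 0 := ne_of_gt (rf_pos (by norm_num) _)
  have hA1 : rf (1/2) (k-1) ≠ 0 := ne_of_gt (rf_pos (by norm_num) _)
  have hFk : ((k).factorial : ℚ) ≠ 0 := Nat.cast_ne_zero.2 (Nat.factorial_ne_zero _)
  have hFk1 : ((k-1).factorial : ℚ) ≠ 0 := Nat.cast_ne_zero.2 (Nat.factorial_ne_zero _)
  have h4 : (4:ℚ) ≠ 0 := by norm_num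
  have h4k : (4:ℚ)^k ≠ 0 := pow_ne_zero _ h4
  have h4e : (4:ℚ)^k = 4^(k-1)*4 := by rw [← pow_succ]; congr 1; omega
  field_simp
  rw [h4e]
  ring

theorem stmt_8 (n : ℕ) (hn : 1 ≤ n) :
    ∑ k ∈ Finset.range (n + 1),
        C (rf (-1/2) k * rf (-(n : ℚ)) k * rf ((n : ℚ) + 1/2) k /
            (rf (1/4) k * rf (3/4) k * (k.factorial : ℚ))) * (-X) ^ k
      = 1 - 2 * ∑ j ∈ Finset.Icc 1 n,
          C ((n.choose j : ℚ) * (((2 * j - 2).factorial : ℚ) / ((j - 1).factorial : ℚ)) *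
              (rf (1/2 + 2 * j) (n - j) / rf (1/2) n)) * X ^ j := by
  rw [Finset.sum_range_succ', ← Finset.Ico_add_one_right_eq_Icc, Finset.sum_Ico_eq_sum_range]
  simp only [Nat.succ_sub_one, Nat.add_sub_cancel]
  have h0 : C (rf (-1/2) 0 * rf (-(n : ℚ)) 0 * rf ((n : ℚ) + 1/2) 0 /
      (rf (1/4) 0 * rf (3/4) 0 * ((0:ℕ).factorial : ℚ))) * (-X : ℚ[X]) ^ 0 = 1 := by
    simp [rf_zero]
  rw [h0]
  have hterm : ∀ i ∈ Finset.range n,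
      C (rf (-1/2) (i+1) * rf (-(n : ℚ)) (i+1) * rf ((n : ℚ) + 1/2) (i+1) /
          (rf (1/4) (i+1) * rf (3/4) (i+1) * ((i+1).factorial : ℚ))) * (-X : ℚ[X]) ^ (i+1)
      = -(2 * (C ((n.choose (1+i) : ℚ) * (((2 * (1+i) - 2).factorial : ℚ) / (((1+i) - 1).factorial : ℚ)) *
            (rf (1/2 + 2 * ((1+i : ℕ) : ℚ)) (n - (1+i)) / rf (1/2) n)) * X ^ (1+i))) := by
    intro i hi
    have hk2 : i + 1 ≤ n := Finset.mem_range.1 hi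
    have hK := key n (i+1) (Nat.le_add_left 1 i) hk2
    rw [add_comm 1 i]
    have hx : ((-X : ℚ[X]))^(i+1) = C ((-1:ℚ)^(i+1)) * X^(i+1) := by
      rw [show (-X : ℚ[X]) = C (-1) * X by simp, mul_pow, ← C_pow]
    rw [hx, ← mul_assoc, ← C_mul,
        mul_comm (rf (-1/2) (i+1) * rf (-(n : ℚ)) (i+1) * rf ((n : ℚ) + 1/2) (i+1) /
          (rf (1/4) (i+1) * rf (3/4) (i+1) * ((i+1).factorial : ℚ))) ((-1:ℚ)^(i+1)), hK]
    rw [show (-2 : ℚ) * ((n.choose (i+1) : ℚ) * (((2 * (i+1) - 2).factorial : ℚ) /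
          (((i+1) - 1).factorial : ℚ)) * (rf (1/2 + 2 * ((i+1 : ℕ) : ℚ)) (n - (i+1)) / rf (1/2) n))
        = -(2 * ((n.choose (i+1) : ℚ) * (((2 * (i+1) - 2).factorial : ℚ) /
          (((i+1) - 1).factorial : ℚ)) * (rf (1/2 + 2 * ((i+1 : ℕ) : ℚ)) (n - (i+1)) / rf (1/2) n))) by ring,
        C_neg, C_mul]
    rw [show (C (2:ℚ)) = (2 : ℚ[X]) by norm_cast]
    ring
  rw [Finset.sum_congr rfl hterm, Finset.sum_neg_distrib, Finset.mul_sum]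
  ring
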